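/- Let A, B ∈ ℝ^{n×n} be symmetric matrices. Suppose V₀ ∈ ℝ^{n×p} and V ∈ ℝ^{n×q} have orthonormal columns and satisfy A V₀ = V₀ D₀ and B V = V D for diagonal matrices D₀ ∈ ℝ^{p×p} and D ∈ ℝ^{q×q} (so the columns of V₀ and V are eigenvectors of A and B, with eigenvalues on the diagonals of D₀ and D). If the smallest closed interval containing all diagonal entries of D₀ is disjoint from the smallest closed interval containing all diagonal entries of D, then ‖V₀ᵀ V‖_op ≤ ‖V₀ᵀ (B − A) V‖_op / min_{i≤p, j≤q} |(D₀)_{ii} − D_{jj}|. -/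

import Mathlib

open MeasureTheory ProbabilityTheory Filter Matrix
open scoped RealInnerProductSpace ENNReal NNReal Topology

noncomputable section

/-- The uniform probability measure on the centered sphere of radius `r` in `ℝ^d`:
the normalized `(d-1)`-dimensional Hausdorff measure on the sphere. -/
def sphereUniform (d : ℕ) (r : ℝ) : Measure (EuclideanSpace ℝ (Fin d)) :=
  (μH[(d : ℝ) - 1] (Metric.sphere (0 : EuclideanSpace ℝ (Fin d)) r))⁻¹ •
    (μH[(d : ℝ) - 1]).restrict (Metric.sphere (0 : EuclideanSpace ℝ (Fin d)) r)

/-- Euclidean norm of a finite real vector. -/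
def eNorm {ι : Type*} [Fintype ι] (v : ι → ℝ) : ℝ := Real.sqrt (∑ i, v i ^ 2)

/-- `ℓ²`-operator norm of a real matrix. -/
def opNorm {ι κ : Type*} [Fintype ι] [Fintype κ] (M : Matrix ι κ ℝ) : ℝ :=
  sSup {r | ∃ v : κ → ℝ, eNorm v ≤ 1 ∧ r = eNorm (M.mulVec v)}

/-- Smallest eigenvalue of a symmetric matrix (infimum of the Rayleigh quotient). -/
def lambdaMin {ι : Type*} [Fintype ι] (M : Matrix ι ι ℝ) : ℝ :=
  sInf {r | ∃ v : ι → ℝ, eNorm v = 1 ∧ r = v ⬝ᵥ M.mulVec v}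

/-- Smallest singular value (as `inf_{‖v‖=1} ‖Mv‖`, appropriate for tall matrices). -/
def sMin {ι κ : Type*} [Fintype ι] [Fintype κ] (M : Matrix ι κ ℝ) : ℝ :=
  sInf {r | ∃ v : κ → ℝ, eNorm v = 1 ∧ r = eNorm (M.mulVec v)}

/-- Orthonormalized probabilists' Hermite polynomial `h_k`. -/
def hermiteFn (k : ℕ) (x : ℝ) : ℝ :=
  Polynomial.aeval x (Polynomial.hermite k) / Real.sqrt (Nat.factorial k)

/-- Hermite coefficient `μ_k(g) = E[g(G) h_k(G)]` for `G ~ N(0,1)`. -/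
def hermiteCoeff (g : ℝ → ℝ) (k : ℕ) : ℝ :=
  ∫ x, g x * hermiteFn k x ∂(gaussianReal 0 1)

/-- `v(σ) := Σ_{k ≥ ℓ} μ_k(σ')²`. -/
def vSigma (ℓ : ℕ) (g : ℝ → ℝ) : ℝ := ∑' k : ℕ, hermiteCoeff g (ℓ + k) ^ 2

/-- Polynomial growth: `|g(x)| ≤ B (1 + |x|)^B`. -/
def PolyGrowth (B : ℝ) (g : ℝ → ℝ) : Prop := ∀ x : ℝ, |g x| ≤ B * (1 + |x|) ^ B

/-- `g` is a weak derivative of `f`. -/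
def IsWeakDeriv (f g : ℝ → ℝ) : Prop :=
  ∀ φ : ℝ → ℝ, ContDiff ℝ (⊤ : ℕ∞) φ → HasCompactSupport φ →
    ∫ x, f x * deriv φ x = - ∫ x, g x * φ x

/-- Assumption on the relative sizes of `n` and `d`. -/
def AssumpND (ℓ : ℕ) (c₀ C₀ : ℝ) (d n : ℕ) : Prop :=
  if ℓ = 1 then
    c₀ * (d : ℝ) ≤ (n : ℝ) ∧ (n : ℝ) ≤ (d : ℝ) ^ 2 / Real.log d ^ C₀
  else
    (d : ℝ) ^ ℓ * Real.log d ^ C₀ ≤ (n : ℝ) ∧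
      (n : ℝ) ≤ (d : ℝ) ^ (ℓ + 1) / Real.log d ^ C₀

/-- Finite-width neural tangent kernel. -/
def ntKernel (σ' : ℝ → ℝ) {d N : ℕ} (ws : Fin N → EuclideanSpace ℝ (Fin d))
    (x y : EuclideanSpace ℝ (Fin d)) : ℝ :=
  (∑ k, σ' ⟪x, ws k⟫ * σ' ⟪y, ws k⟫) * ⟪x, y⟫ / ((N : ℝ) * (d : ℝ))

/-- Empirical neural tangent kernel matrix `K_N`. -/
def ntKernelMatrix (σ' : ℝ → ℝ) {d n N : ℕ} (xs : Fin n → EuclideanSpace ℝ (Fin d))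
    (ws : Fin N → EuclideanSpace ℝ (Fin d)) : Matrix (Fin n) (Fin n) ℝ :=
  Matrix.of fun i j => ntKernel σ' ws (xs i) (xs j)

/-- Infinite-width neural tangent kernel. -/
def infKernel (σ' : ℝ → ℝ) (d : ℕ) (x y : EuclideanSpace ℝ (Fin d)) : ℝ :=
  (∫ w, σ' ⟪x, w⟫ * σ' ⟪y, w⟫ ∂sphereUniform d 1) * ⟪x, y⟫ / (d : ℝ)

/-- Infinite-width kernel matrix `K`. -/
def infKernelMatrix (σ' : ℝ → ℝ) {d n : ℕ} (xs : Fin n → EuclideanSpace ℝ (Fin d)) :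
    Matrix (Fin n) (Fin n) ℝ :=
  Matrix.of fun i j => infKernel σ' d (xs i) (xs j)

/-- NT featurization matrix `Φ ∈ ℝ^{n × Nd}`. -/
def featureMatrix (σ' : ℝ → ℝ) {d n N : ℕ} (xs : Fin n → EuclideanSpace ℝ (Fin d))
    (ws : Fin N → EuclideanSpace ℝ (Fin d)) : Matrix (Fin n) (Fin N × Fin d) ℝ :=
  Matrix.of fun i p => (1 / Real.sqrt ((N : ℝ) * (d : ℝ))) * σ' ⟪xs i, ws p.1⟫ * xs i p.2

/-- Data matrix with rows `xᵢᵀ`. -/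
def XmatOf {d n : ℕ} (xs : Fin n → EuclideanSpace ℝ (Fin d)) : Matrix (Fin n) (Fin d) ℝ :=
  Matrix.of fun i j => xs i j

open Classical in
/-- Inverse square root of a positive semidefinite matrix. -/
def invSqrt {n : ℕ} (M : Matrix (Fin n) (Fin n) ℝ) : Matrix (Fin n) (Fin n) ℝ :=
  if h : M.PosSemidef then
    ((h.1.eigenvectorUnitary : Matrix (Fin n) (Fin n) ℝ) *
      Matrix.diagonal ((RCLike.ofReal : ℝ → ℝ) ∘ (Real.sqrt ·) ∘ h.1.eigenvalues) *
      (star h.1.eigenvectorUnitary : Matrix (Fin n) (Fin n) ℝ))⁻¹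
  else 0

/-- First coordinate of a Euclidean vector. -/
def coord0 {d : ℕ} (x : EuclideanSpace ℝ (Fin d)) : ℝ := if h : 0 < d then x ⟨0, h⟩ else 0

/-- The law of `√d ⟨x, e₁⟩` for `x` uniform on the sphere of radius `√d`. -/
def gegMeasure (d : ℕ) : Measure ℝ :=
  Measure.map (fun x : EuclideanSpace ℝ (Fin d) => Real.sqrt d * coord0 x)
    (sphereUniform d (Real.sqrt d))

/-- `Q` is the degree-`k` Gegenbauer polynomial in dimension `d`. -/
def IsGegenbauer (d k : ℕ) (Q : Polynomial ℝ) : Prop :=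
  Q.natDegree = k ∧ Q.eval (d : ℝ) = 1 ∧
    ∀ R : Polynomial ℝ, R.natDegree < k → ∫ t, Q.eval t * R.eval t ∂gegMeasure d = 0

/-- Normalizing constant `B(d,k) = 1/E[Q_k(√d⟨x,e₁⟩)²]`. -/
def gegNormConst (d : ℕ) (Q : Polynomial ℝ) : ℝ := (∫ t, Q.eval t ^ 2 ∂gegMeasure d)⁻¹

/-- Gegenbauer coefficient `λ_{d,k}(g) = E[g(⟨x,e₁⟩) Q_k(√d⟨x,e₁⟩)]`. -/
def gegCoeff (d : ℕ) (g : ℝ → ℝ) (Q : Polynomial ℝ) : ℝ :=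
  ∫ t, g (t / Real.sqrt d) * Q.eval t ∂gegMeasure d

/-- Gegenbauer coefficients `γ_k` of the infinite-width kernel. -/
def gammaCoeff (d : ℕ) (σ' : ℝ → ℝ) (Qf : ℕ → Polynomial ℝ) : ℕ → ℝ
  | 0 => gegCoeff d σ' (Qf 1) ^ 2
  | k + 1 =>
      (((k : ℝ) + 2) / (2 * ((k : ℝ) + 1) + d)) * gegNormConst d (Qf (k + 2)) *
          gegCoeff d σ' (Qf (k + 2)) ^ 2 +
        (((k : ℝ) + 1 + (d : ℝ) - 3) / (2 * ((k : ℝ) + 1) + (d : ℝ) - 4)) *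
          gegNormConst d (Qf k) * gegCoeff d σ' (Qf k) ^ 2

/-- Tail sum `γ_{>ℓ} = Σ_{k > ℓ} γ_k`. -/
def gammaTail (d ℓ : ℕ) (σ' : ℝ → ℝ) (Qf : ℕ → Polynomial ℝ) : ℝ :=
  ∑' k : ℕ, gammaCoeff d σ' Qf (ℓ + 1 + k)

/-- Truncated (degree-`ℓ`) polynomial kernel `K^p`. -/
def polyKernel (d : ℕ) (σ' : ℝ → ℝ) (Qf : ℕ → Polynomial ℝ) (ℓ : ℕ)
    (x y : EuclideanSpace ℝ (Fin d)) : ℝ :=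
  ∑ k ∈ Finset.range (ℓ + 1), gammaCoeff d σ' Qf k * (Qf k).eval ⟪x, y⟫

/-- Kernel matrix of a kernel function on the data. -/
def kernelMatrix {d n : ℕ} (Kf : EuclideanSpace ℝ (Fin d) → EuclideanSpace ℝ (Fin d) → ℝ)
    (xs : Fin n → EuclideanSpace ℝ (Fin d)) : Matrix (Fin n) (Fin n) ℝ :=
  Matrix.of fun i j => Kf (xs i) (xs j)

/-- Kernel evaluation vector `K(·,x₀)`. -/
def kernelVec {d n : ℕ} (Kf : EuclideanSpace ℝ (Fin d) → EuclideanSpace ℝ (Fin d) → ℝ)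
    (xs : Fin n → EuclideanSpace ℝ (Fin d)) (x₀ : EuclideanSpace ℝ (Fin d)) : Fin n → ℝ :=
  fun i => Kf (xs i) x₀

/-- Ridge resolventM `(γ I + K)⁻¹`. -/
def resolventM {d n : ℕ} (Kf : EuclideanSpace ℝ (Fin d) → EuclideanSpace ℝ (Fin d) → ℝ)
    (xs : Fin n → EuclideanSpace ℝ (Fin d)) (γ : ℝ) : Matrix (Fin n) (Fin n) ℝ :=
  (γ • (1 : Matrix (Fin n) (Fin n) ℝ) + kernelMatrix Kf xs)⁻¹

/-- Test error of kernel ridge regression with kernel `Kf` and ridge parameter `γ`. -/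
def krrRisk {d n : ℕ} (f : EuclideanSpace ℝ (Fin d) → ℝ)
    (Kf : EuclideanSpace ℝ (Fin d) → EuclideanSpace ℝ (Fin d) → ℝ)
    (xs : Fin n → EuclideanSpace ℝ (Fin d)) (y : Fin n → ℝ) (γ : ℝ) : ℝ :=
  ∫ x₀, (f x₀ - kernelVec Kf xs x₀ ⬝ᵥ (resolventM Kf xs γ).mulVec y) ^ 2
    ∂sphereUniform d (Real.sqrt d)

/-- Bias term of the generalization-error decomposition. -/
def EBias {d n : ℕ} (f : EuclideanSpace ℝ (Fin d) → ℝ)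
    (Kf : EuclideanSpace ℝ (Fin d) → EuclideanSpace ℝ (Fin d) → ℝ)
    (xs : Fin n → EuclideanSpace ℝ (Fin d)) (γ : ℝ) : ℝ :=
  ∫ x₀, (f x₀ - kernelVec Kf xs x₀ ⬝ᵥ (resolventM Kf xs γ).mulVec fun i => f (xs i)) ^ 2
    ∂sphereUniform d (Real.sqrt d)

/-- Second-moment kernel matrix `E_{x₀}[K(·,x₀)K(·,x₀)ᵀ]`. -/
def kernelSq {d n : ℕ} (Kf : EuclideanSpace ℝ (Fin d) → EuclideanSpace ℝ (Fin d) → ℝ)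
    (xs : Fin n → EuclideanSpace ℝ (Fin d)) : Matrix (Fin n) (Fin n) ℝ :=
  Matrix.of fun i j => ∫ x₀, Kf (xs i) x₀ * Kf (xs j) x₀ ∂sphereUniform d (Real.sqrt d)

/-- Variance term of the generalization-error decomposition. -/
def EVar {d n : ℕ} (Kf : EuclideanSpace ℝ (Fin d) → EuclideanSpace ℝ (Fin d) → ℝ)
    (xs : Fin n → EuclideanSpace ℝ (Fin d)) (γ : ℝ) (ε : Fin n → ℝ) : ℝ :=
  ε ⬝ᵥ (resolventM Kf xs γ * kernelSq Kf xs * resolventM Kf xs γ).mulVec ε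

/-- Cross term of the generalization-error decomposition. -/
def ECross {d n : ℕ} (f : EuclideanSpace ℝ (Fin d) → ℝ)
    (Kf : EuclideanSpace ℝ (Fin d) → EuclideanSpace ℝ (Fin d) → ℝ)
    (xs : Fin n → EuclideanSpace ℝ (Fin d)) (γ : ℝ) (ε : Fin n → ℝ) : ℝ :=
  ε ⬝ᵥ (resolventM Kf xs γ).mulVec fun i =>
    ∫ x₀, Kf (xs i) x₀ *
        (f x₀ - kernelVec Kf xs x₀ ⬝ᵥ (resolventM Kf xs γ).mulVec fun j => f (xs j))
      ∂sphereUniform d (Real.sqrt d)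

/-- Ridge regression estimator over linear features. -/
def ridgeBeta {d n : ℕ} (xs : Fin n → EuclideanSpace ℝ (Fin d)) (y : Fin n → ℝ) (γ : ℝ) :
    Fin d → ℝ :=
  ((XmatOf xs)ᵀ * XmatOf xs + (γ * (d : ℝ)) • (1 : Matrix (Fin d) (Fin d) ℝ))⁻¹.mulVec
    ((XmatOf xs)ᵀ.mulVec y)

/-- Test error of ridge regression over linear features. -/
def RlinRisk {d n : ℕ} (β : EuclideanSpace ℝ (Fin d)) (xs : Fin n → EuclideanSpace ℝ (Fin d))
    (y : Fin n → ℝ) (γ : ℝ) : ℝ :=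
  ∫ x₀, (⟪β, x₀⟫ - ridgeBeta xs y γ ⬝ᵥ fun j => x₀ j) ^ 2 ∂sphereUniform d (Real.sqrt d)

/-- The Rademacher (uniform `±1`) law on `ℝ`. -/
def rademacher : Measure ℝ := ((1 : ℝ≥0∞) / 2) • (Measure.dirac (-1) + Measure.dirac 1)

/-- Second-layer signs `b_k`. -/
def signCoeff {N : ℕ} (k : Fin N ⊕ Fin N) : ℝ := Sum.elim (fun _ => (1 : ℝ)) (fun _ => -1) k

/-- Two-layer network with fixed `±1` second layer and scale `α`. -/
def fNN (σ : ℝ → ℝ) (α : ℝ) {d N : ℕ}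
    (Wt : EuclideanSpace ℝ ((Fin N ⊕ Fin N) × Fin d)) (x : EuclideanSpace ℝ (Fin d)) : ℝ :=
  (α / Real.sqrt N) * ∑ k : Fin N ⊕ Fin N, signCoeff k * σ (∑ j, Wt (k, j) * x j)

/-- Empirical risk of the two-layer network. -/
def empRisk (σ : ℝ → ℝ) (α : ℝ) {d N n : ℕ} (xs : Fin n → EuclideanSpace ℝ (Fin d))
    (y : Fin n → ℝ) (Wt : EuclideanSpace ℝ ((Fin N ⊕ Fin N) × Fin d)) : ℝ :=
  (1 / (n : ℝ)) * ∑ i, (y i - fNN σ α Wt (xs i)) ^ 2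

/-- Symmetric initialization `w̃_k⁰ = w̃_{N+k}⁰ = w_k`. -/
def initW {d N : ℕ} (ws : Fin N → EuclideanSpace ℝ (Fin d)) :
    EuclideanSpace ℝ ((Fin N ⊕ Fin N) × Fin d) :=
  (WithLp.equiv 2 (((Fin N ⊕ Fin N) × Fin d) → ℝ)).symm
    fun p => ws (Sum.elim id id p.1) p.2

/-- Neural tangent model `f_NT(x; a, W)`. -/
def fNT (σ' : ℝ → ℝ) {d N : ℕ} (ws : Fin N → EuclideanSpace ℝ (Fin d))
    (a : Fin N × Fin d → ℝ) (x : EuclideanSpace ℝ (Fin d)) : ℝ :=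
  (1 / Real.sqrt N) * ∑ k, (∑ j, a (k, j) * x j) * σ' ⟪x, ws k⟫

/-- Subgaussian law with constant `C`. -/
def IsSubgaussianLaw (C : ℝ) (ν : Measure ℝ) : Prop :=
  ∀ t : ℝ, ∫ x, Real.exp (t * x) ∂ν ≤ Real.exp (C * t ^ 2)

/-- `Ψ = [1ₙ, X]`. -/
def PsiMat {d n : ℕ} (X : Fin n → EuclideanSpace ℝ (Fin d)) :
    Matrix (Fin n) (Fin (d + 1)) ℝ :=
  Matrix.of fun i j => Fin.cases (motive := fun _ => ℝ) 1 (fun j' => X i j') j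

/-- The grid `{j/M : j ∈ ℤ}`. -/
def Dgrid (M : ℕ) : Set ℝ := {x | ∃ j : ℤ, x = (j : ℝ) / (M : ℝ)}

/-- The kernel `H₁`. -/
def H1fun (σ' : ℝ → ℝ) (d : ℕ) (g : EuclideanSpace ℝ (Fin d) → ℝ)
    (x x' : EuclideanSpace ℝ (Fin d)) : ℝ :=
  ∫ w, (∫ z₁, (∫ z₂,
        σ' ⟪x, w⟫ * σ' ⟪z₁, w⟫ * σ' ⟪x', w⟫ * σ' ⟪z₂, w⟫ *
          (⟪x, z₁⟫ / (d : ℝ)) * (⟪x', z₂⟫ / (d : ℝ)) * g z₁ * g z₂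
      ∂sphereUniform d (Real.sqrt d)) ∂sphereUniform d (Real.sqrt d)) ∂sphereUniform d 1

/-- The kernel `H₃`. -/
def H3fun (σ' : ℝ → ℝ) (d : ℕ) (x x' : EuclideanSpace ℝ (Fin d)) : ℝ :=
  ∫ w, (∫ z,
        σ' ⟪x, w⟫ * σ' ⟪x', w⟫ * σ' ⟪z, w⟫ ^ 2 *
          (⟪x, z⟫ / (d : ℝ)) * (⟪x', z⟫ / (d : ℝ))
      ∂sphereUniform d (Real.sqrt d)) ∂sphereUniform d 1

section DKaux

/-- view a plain vector as an element of Euclidean space -/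
private def toE {m : ℕ} (v : Fin m → ℝ) : EuclideanSpace ℝ (Fin m) :=
  (WithLp.equiv 2 (Fin m → ℝ)).symm v

private lemma eNorm_nonneg' {m : ℕ} (v : Fin m → ℝ) : 0 ≤ eNorm v := Real.sqrt_nonneg _

private lemma eNorm_eq_norm {m : ℕ} (v : Fin m → ℝ) : eNorm v = ‖toE v‖ := by
  rw [EuclideanSpace.norm_eq, eNorm]
  congr 1
  refine Finset.sum_congr rfl fun i _ => ?_
  simp [toE, Real.norm_eq_abs, sq_abs]

private lemma dp_inner {m : ℕ} (u v : Fin m → ℝ) : u ⬝ᵥ v = ⟪toE u, toE v⟫ := by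
  simp [toE, PiLp.inner_apply, RCLike.inner_apply, dotProduct, mul_comm]

private lemma dp_self_eq {m : ℕ} (u : Fin m → ℝ) : u ⬝ᵥ u = eNorm u ^ 2 := by
  rw [eNorm, Real.sq_sqrt (by positivity)]
  simp [dotProduct, sq]

private lemma dp_le {m : ℕ} (u v : Fin m → ℝ) : u ⬝ᵥ v ≤ eNorm u * eNorm v := by
  rw [dp_inner, eNorm_eq_norm, eNorm_eq_norm]
  exact real_inner_le_norm _ _

private lemma dot_mulVec_shift {a b : ℕ} (M : Matrix (Fin a) (Fin b) ℝ)
    (x : Fin a → ℝ) (u : Fin b → ℝ) : x ⬝ᵥ (M *ᵥ u) = (Mᵀ *ᵥ x) ⬝ᵥ u := by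
  rw [Matrix.dotProduct_mulVec, ← Matrix.vecMul_transpose, Matrix.transpose_transpose]

private lemma mem_opSet_zero {p q : ℕ} (M : Matrix (Fin p) (Fin q) ℝ) :
    (0 : ℝ) ∈ {r | ∃ v : Fin q → ℝ, eNorm v ≤ 1 ∧ r = eNorm (M.mulVec v)} := by
  refine ⟨0, by simp [eNorm], by simp [eNorm, Matrix.mulVec_zero]⟩

private lemma opSet_bddAbove {p q : ℕ} (M : Matrix (Fin p) (Fin q) ℝ) :
    BddAbove {r | ∃ v : Fin q → ℝ, eNorm v ≤ 1 ∧ r = eNorm (M.mulVec v)} := by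
  classical
  refine ⟨‖LinearMap.toContinuousLinearMap (Matrix.toEuclideanLin M)‖, ?_⟩
  rintro r ⟨v, hv, rfl⟩
  have h1 : eNorm (M.mulVec v) =
      ‖LinearMap.toContinuousLinearMap (Matrix.toEuclideanLin M) (toE v)‖ := by
    rw [eNorm_eq_norm]; rfl
  rw [h1]
  calc ‖LinearMap.toContinuousLinearMap (Matrix.toEuclideanLin M) (toE v)‖
      ≤ ‖LinearMap.toContinuousLinearMap (Matrix.toEuclideanLin M)‖ * ‖toE v‖ :=
        ContinuousLinearMap.le_opNorm _ _
    _ ≤ ‖LinearMap.toContinuousLinearMap (Matrix.toEuclideanLin M)‖ * 1 := by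
        apply mul_le_mul_of_nonneg_left _ (norm_nonneg _)
        rw [← eNorm_eq_norm]; exact hv
    _ = _ := mul_one _

private lemma opNorm_nonneg'' {p q : ℕ} (M : Matrix (Fin p) (Fin q) ℝ) : 0 ≤ opNorm M :=
  le_csSup (opSet_bddAbove M) (mem_opSet_zero M)

private lemma le_opNorm'' {p q : ℕ} (M : Matrix (Fin p) (Fin q) ℝ) {v : Fin q → ℝ}
    (hv : eNorm v ≤ 1) : eNorm (M.mulVec v) ≤ opNorm M :=
  le_csSup (opSet_bddAbove M) ⟨v, hv, rfl⟩

private lemma opNorm_le'' {p q : ℕ} (M : Matrix (Fin p) (Fin q) ℝ) {c : ℝ}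
    (h : ∀ v : Fin q → ℝ, eNorm v ≤ 1 → eNorm (M.mulVec v) ≤ c) : opNorm M ≤ c := by
  refine csSup_le ⟨0, mem_opSet_zero M⟩ ?_
  rintro r ⟨v, hv, rfl⟩
  exact h v hv

private lemma opNorm_neg'' {p q : ℕ} (M : Matrix (Fin p) (Fin q) ℝ) :
    opNorm (-M) = opNorm M := by
  unfold opNorm
  congr 1
  ext r
  have h : ∀ v : Fin q → ℝ, eNorm ((-M).mulVec v) = eNorm (M.mulVec v) := by
    intro v
    rw [Matrix.neg_mulVec, eNorm, eNorm]
    congr 1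
    exact Finset.sum_congr rfl fun i _ => by simp
  constructor
  · rintro ⟨v, hv, rfl⟩; exact ⟨v, hv, h v⟩
  · rintro ⟨v, hv, rfl⟩; exact ⟨v, hv, (h v).symm⟩

/-- The key Sylvester-type bound after shifting: if `E = S D - D₀ S` with
`D₀ ≤ 0 ≤ δ ≤ D`, then `δ ‖S v‖ ≤ ‖E‖` for all unit `v`. -/
private lemma dk_key {p q : ℕ} (S E : Matrix (Fin p) (Fin q) ℝ)
    (d₀ : Fin p → ℝ) (dd : Fin q → ℝ) (δ : ℝ) (hδ : 0 ≤ δ)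
    (h₀ : ∀ i, d₀ i ≤ 0) (h₁ : ∀ j, δ ≤ dd j)
    (hE : E = S * Matrix.diagonal dd - Matrix.diagonal d₀ * S)
    (v : Fin q → ℝ) (hv : eNorm v ≤ 1) : δ * eNorm (S.mulVec v) ≤ opNorm E := by
  classical
  set T : Matrix (Fin q) (Fin q) ℝ := Sᵀ * S with hTdef
  have hT : T.IsHermitian := by
    rw [hTdef, ← Matrix.conjTranspose_eq_transpose_of_trivial]
    exact Matrix.isHermitian_conjTranspose_mul_self S
  set b := hT.eigenvectorBasis with hbdef
  set μ := hT.eigenvalues with hμdef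
  have hTmul : ∀ w : Fin q → ℝ, Sᵀ *ᵥ (S *ᵥ w) = T *ᵥ w := fun w => by
    rw [hTdef, Matrix.mulVec_mulVec]
  -- quadratic form identity
  have hquadT : ∀ w : Fin q → ℝ, (S *ᵥ w) ⬝ᵥ (S *ᵥ w) = w ⬝ᵥ (T *ᵥ w) := by
    intro w
    rw [← hTmul w, dot_mulVec_shift Sᵀ, Matrix.transpose_transpose]
  -- per-eigenvector bound
  have hk : ∀ k : Fin q, δ ^ 2 * μ k ≤ opNorm E ^ 2 := by
    intro k
    set w : Fin q → ℝ := ⇑(b k) with hwdef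
    have hwE : toE w = b k := rfl
    have hnw : eNorm w = 1 := by
      rw [eNorm_eq_norm, hwE]; exact b.orthonormal.1 k
    have hww : w ⬝ᵥ w = 1 := by rw [dp_self_eq, hnw]; norm_num
    have hTw : T *ᵥ w = μ k • w := hT.mulVec_eigenvectorBasis k
    have hSw : (S *ᵥ w) ⬝ᵥ (S *ᵥ w) = μ k := by
      rw [hquadT, hTw, dotProduct_smul, smul_eq_mul, hww, mul_one]
    have hμnn : 0 ≤ μ k := by
      rw [← hSw, dp_self_eq]; positivity
    have heSw : eNorm (S *ᵥ w) = Real.sqrt (μ k) := by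
      rw [← hSw, dp_self_eq, Real.sqrt_sq (eNorm_nonneg' _)]
    -- lower bound on (Sw)ᵀ E w
    have hEw : (S *ᵥ w) ⬝ᵥ (E *ᵥ w) =
        μ k * (∑ j, dd j * w j ^ 2) - ∑ i, d₀ i * (S *ᵥ w) i ^ 2 := by
      rw [hE, Matrix.sub_mulVec, dotProduct_sub]
      congr 1
      · rw [← Matrix.mulVec_mulVec, dot_mulVec_shift, hTmul, hTw,
          smul_dotProduct, smul_eq_mul]
        congr 1
        simp only [dotProduct, Matrix.mulVec_diagonal]
        exact Finset.sum_congr rfl fun j _ => by ring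
      · rw [← Matrix.mulVec_mulVec]
        rw [dot_mulVec_shift (Matrix.diagonal d₀)]
        rw [Matrix.diagonal_transpose]
        simp only [dotProduct, Matrix.mulVec_diagonal]
        exact Finset.sum_congr rfl fun i _ => by ring
    have hsum1 : ∑ j, w j ^ 2 = 1 := by
      rw [← hww]; simp [dotProduct, sq]
    have hlow : μ k * δ ≤ (S *ᵥ w) ⬝ᵥ (E *ᵥ w) := by
      rw [hEw]
      have t1 : μ k * δ ≤ μ k * ∑ j, dd j * w j ^ 2 := by
        apply mul_le_mul_of_nonneg_left _ hμnn
        calc δ = ∑ j, δ * w j ^ 2 := by rw [← Finset.mul_sum, hsum1, mul_one]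
          _ ≤ ∑ j, dd j * w j ^ 2 :=
            Finset.sum_le_sum fun j _ => mul_le_mul_of_nonneg_right (h₁ j) (sq_nonneg _)
      have t2 : ∑ i, d₀ i * (S *ᵥ w) i ^ 2 ≤ 0 :=
        Finset.sum_nonpos fun i _ => mul_nonpos_of_nonpos_of_nonneg (h₀ i) (sq_nonneg _)
      linarith
    have hup : (S *ᵥ w) ⬝ᵥ (E *ᵥ w) ≤ Real.sqrt (μ k) * opNorm E := by
      calc (S *ᵥ w) ⬝ᵥ (E *ᵥ w) ≤ eNorm (S *ᵥ w) * eNorm (E *ᵥ w) := dp_le _ _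
        _ ≤ Real.sqrt (μ k) * opNorm E := by
            rw [heSw]
            exact mul_le_mul_of_nonneg_left (le_opNorm'' E (le_of_eq hnw))
              (Real.sqrt_nonneg _)
    have hkey : Real.sqrt (μ k) * δ ≤ opNorm E := by
      rcases eq_or_lt_of_le hμnn with h0 | hpos
      · rw [← h0, Real.sqrt_zero, zero_mul]; exact opNorm_nonneg'' E
      · have hs : 0 < Real.sqrt (μ k) := Real.sqrt_pos.2 hpos
        have : Real.sqrt (μ k) * (Real.sqrt (μ k) * δ) ≤ Real.sqrt (μ k) * opNorm E := by
          rw [← mul_assoc, Real.mul_self_sqrt hμnn]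
          exact le_trans hlow hup
        exact le_of_mul_le_mul_left this hs
    have := pow_le_pow_left₀ (by positivity) hkey 2
    calc δ ^ 2 * μ k = (Real.sqrt (μ k) * δ) ^ 2 := by
          rw [mul_pow, Real.sq_sqrt hμnn]; ring
      _ ≤ opNorm E ^ 2 := this
  -- expand v in the eigenbasis
  have hcinner : ∀ (x : EuclideanSpace ℝ (Fin q)) k, ⟪x, b k⟫ = b.repr x k := fun x k => by
    rw [real_inner_comm, ← b.repr_apply_apply]
  have hLbk : ∀ k, Matrix.toEuclideanLin T (b k) = (μ k : ℝ) • b k := by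
    intro k
    have h1 : Matrix.toEuclideanLin T (b k) = toE (T *ᵥ ⇑(b k)) := rfl
    rw [h1, hT.mulVec_eigenvectorBasis k]
    rfl
  have hquad : v ⬝ᵥ (T *ᵥ v) = ∑ k, μ k * b.repr (toE v) k ^ 2 := by
    have h0 : v ⬝ᵥ (T *ᵥ v) = ⟪toE v, Matrix.toEuclideanLin T (toE v)⟫ := by
      rw [dp_inner]; rfl
    have e1 : Matrix.toEuclideanLin T (toE v) =
        ∑ k, (b.repr (toE v) k * μ k) • b k := by
      conv_lhs => rw [← b.sum_repr (toE v)]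
      rw [_root_.map_sum]
      refine Finset.sum_congr rfl fun k _ => ?_
      rw [LinearMap.map_smul, hLbk k, smul_smul]
    rw [h0, e1, inner_sum]
    refine Finset.sum_congr rfl fun k _ => ?_
    rw [real_inner_smul_right, hcinner (toE v) k]
    ring
  have hcsum : ∑ k, b.repr (toE v) k ^ 2 ≤ 1 := by
    have e1 : ∑ k, b.repr (toE v) k ^ 2 = eNorm (⇑(b.repr (toE v))) ^ 2 := by
      rw [eNorm, Real.sq_sqrt (by positivity)]
    have e2 : eNorm (⇑(b.repr (toE v))) = eNorm v := by
      rw [eNorm_eq_norm, eNorm_eq_norm]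
      have e3 : toE (⇑(b.repr (toE v))) = b.repr (toE v) := rfl
      rw [e3, LinearIsometryEquiv.norm_map]
    rw [e1, e2]
    calc eNorm v ^ 2 ≤ 1 ^ 2 := pow_le_pow_left₀ (eNorm_nonneg' _) hv 2
      _ = 1 := one_pow 2
  -- combine
  have hfin : (δ * eNorm (S *ᵥ v)) ^ 2 ≤ opNorm E ^ 2 := by
    have h1 : (δ * eNorm (S *ᵥ v)) ^ 2 = δ ^ 2 * (v ⬝ᵥ (T *ᵥ v)) := by
      rw [← hquadT v, dp_self_eq]; ring
    rw [h1, hquad, Finset.mul_sum]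
    calc ∑ k, δ ^ 2 * (μ k * b.repr (toE v) k ^ 2)
        = ∑ k, (δ ^ 2 * μ k) * b.repr (toE v) k ^ 2 := by
          exact Finset.sum_congr rfl fun k _ => by ring
      _ ≤ ∑ k, opNorm E ^ 2 * b.repr (toE v) k ^ 2 :=
          Finset.sum_le_sum fun k _ => mul_le_mul_of_nonneg_right (hk k) (sq_nonneg _)
      _ = opNorm E ^ 2 * ∑ k, b.repr (toE v) k ^ 2 := by rw [← Finset.mul_sum]
      _ ≤ opNorm E ^ 2 * 1 := mul_le_mul_of_nonneg_left hcsum (sq_nonneg _)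
      _ = opNorm E ^ 2 := mul_one _
  have h0 : 0 ≤ δ * eNorm (S *ᵥ v) := mul_nonneg hδ (eNorm_nonneg' _)
  calc δ * eNorm (S *ᵥ v) = Real.sqrt ((δ * eNorm (S *ᵥ v)) ^ 2) :=
        (Real.sqrt_sq h0).symm
    _ ≤ Real.sqrt (opNorm E ^ 2) := Real.sqrt_le_sqrt hfin
    _ = opNorm E := Real.sqrt_sq (opNorm_nonneg'' E)

/-- The main Davis–Kahan bound in the case when the `d₀` interval lies below `dd`. -/
private lemma dk_main {p q : ℕ} (hp : 0 < p) (hq : 0 < q)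
    (S E : Matrix (Fin p) (Fin q) ℝ) (d₀ : Fin p → ℝ) (dd : Fin q → ℝ)
    (hE : E = S * Matrix.diagonal dd - Matrix.diagonal d₀ * S)
    (hlt : ∀ i j, d₀ i < dd j) :
    opNorm S ≤ opNorm E / sInf {r | ∃ i j, r = |d₀ i - dd j|} := by
  haveI : Nonempty (Fin p) := ⟨⟨0, hp⟩⟩
  haveI : Nonempty (Fin q) := ⟨⟨0, hq⟩⟩
  obtain ⟨i₀, hi₀⟩ := Finite.exists_max d₀
  obtain ⟨j₀, hj₀⟩ := Finite.exists_min dd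
  set c := d₀ i₀ with hcdef
  set δ := sInf {r | ∃ i j, r = |d₀ i - dd j|} with hδdef
  have habs : ∀ i j, |d₀ i - dd j| = dd j - d₀ i := fun i j => by
    rw [abs_sub_comm, abs_of_pos (sub_pos.2 (hlt i j))]
  have hmem : ∀ r ∈ {r | ∃ i j, r = |d₀ i - dd j|}, dd j₀ - d₀ i₀ ≤ r := by
    rintro r ⟨i, j, rfl⟩
    rw [habs]
    have h1 := hi₀ i
    have h2 := hj₀ j
    linarith
  have hδpos : 0 < δ :=
    lt_of_lt_of_le (sub_pos.2 (hlt i₀ j₀)) (le_csInf ⟨_, i₀, j₀, rfl⟩ hmem)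
  have hbdd : BddBelow {r | ∃ i j, r = |d₀ i - dd j|} :=
    ⟨0, by rintro r ⟨i, j, rfl⟩; exact abs_nonneg _⟩
  have hδle : ∀ j, δ ≤ dd j - c := fun j => by
    have h := csInf_le hbdd ⟨i₀, j, rfl⟩
    rw [habs] at h
    exact h
  have hdiag1 : S * Matrix.diagonal (fun j : Fin q => dd j - c) =
      S * Matrix.diagonal dd - c • S := by
    ext i j
    simp [Matrix.mul_diagonal, Matrix.sub_apply]
    ring
  have hdiag2 : Matrix.diagonal (fun i : Fin p => d₀ i - c) * S =
      Matrix.diagonal d₀ * S - c • S := by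
    ext i j
    simp [Matrix.diagonal_mul, Matrix.sub_apply]
    ring
  have hE' : E = S * Matrix.diagonal (fun j => dd j - c) -
      Matrix.diagonal (fun i => d₀ i - c) * S := by
    rw [hdiag1, hdiag2, hE]
    abel
  have hkey := dk_key S E (fun i => d₀ i - c) (fun j => dd j - c) δ hδpos.le
    (fun i => sub_nonpos.2 (hi₀ i)) hδle hE'
  refine opNorm_le'' S fun v hv => ?_
  rw [le_div_iff₀ hδpos]
  have := hkey v hv
  linarith

end DKaux

/-- the eigenvector perturbation bound, Eq. (7.11) of the paper:
a Davis–Kahan type bound for eigenvector blocks of two symmetric matrices whose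
corresponding eigenvalue intervals are separated. -/
theorem eigenvector_block_perturbation {n p q : ℕ} (A B : Matrix (Fin n) (Fin n) ℝ)
    (hA : Aᵀ = A) (hB : Bᵀ = B)
    (V₀ : Matrix (Fin n) (Fin p) ℝ) (V : Matrix (Fin n) (Fin q) ℝ)
    (hV₀ : V₀ᵀ * V₀ = 1) (hV : Vᵀ * V = 1)
    (d₀ : Fin p → ℝ) (dd : Fin q → ℝ)
    (hAV₀ : A * V₀ = V₀ * Matrix.diagonal d₀) (hBV : B * V = V * Matrix.diagonal dd)
    (hsep : (∀ i j, d₀ i < dd j) ∨ (∀ i j, dd j < d₀ i)) :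
    opNorm (V₀ᵀ * V) ≤
      opNorm (V₀ᵀ * (B - A) * V) / sInf {r | ∃ i j, r = |d₀ i - dd j|} := by
  have hRHSnn : 0 ≤ opNorm (V₀ᵀ * (B - A) * V) / sInf {r | ∃ i j, r = |d₀ i - dd j|} := by
    refine div_nonneg (opNorm_nonneg'' _) (Real.sInf_nonneg ?_)
    rintro r ⟨i, j, rfl⟩
    exact abs_nonneg _
  rcases Nat.eq_zero_or_pos p with hp | hp
  · subst hp
    refine le_trans (opNorm_le'' _ fun v hv => ?_) hRHSnn
    simp [eNorm]
  rcases Nat.eq_zero_or_pos q with hq | hq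
  · subst hq
    refine le_trans (opNorm_le'' _ fun v hv => ?_) hRHSnn
    have h0 : (V₀ᵀ * V) *ᵥ v = 0 := by
      funext i
      simp [Matrix.mulVec, dotProduct]
    rw [h0]
    simp [eNorm]
  have hE : V₀ᵀ * (B - A) * V =
      (V₀ᵀ * V) * Matrix.diagonal dd - Matrix.diagonal d₀ * (V₀ᵀ * V) := by
    have h1 : V₀ᵀ * B * V = (V₀ᵀ * V) * Matrix.diagonal dd := by
      rw [Matrix.mul_assoc, hBV, ← Matrix.mul_assoc]
    have h2 : V₀ᵀ * A * V = Matrix.diagonal d₀ * (V₀ᵀ * V) := by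
      have h3 : V₀ᵀ * A = Matrix.diagonal d₀ * V₀ᵀ := by
        calc V₀ᵀ * A = V₀ᵀ * Aᵀ := by rw [hA]
          _ = (A * V₀)ᵀ := by rw [← Matrix.transpose_mul]
          _ = (V₀ * Matrix.diagonal d₀)ᵀ := by rw [hAV₀]
          _ = (Matrix.diagonal d₀)ᵀ * V₀ᵀ := Matrix.transpose_mul _ _
          _ = Matrix.diagonal d₀ * V₀ᵀ := by rw [Matrix.diagonal_transpose]
      rw [h3, Matrix.mul_assoc]
    calc V₀ᵀ * (B - A) * V = V₀ᵀ * B * V - V₀ᵀ * A * V := by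
          rw [Matrix.mul_sub, Matrix.sub_mul]
      _ = _ := by rw [h1, h2]
  rcases hsep with hlt | hgt
  · rw [hE]
    exact dk_main hp hq _ _ d₀ dd rfl hlt
  · have hE' : -(V₀ᵀ * (B - A) * V) =
        (V₀ᵀ * V) * Matrix.diagonal (fun j => -dd j) -
          Matrix.diagonal (fun i => -d₀ i) * (V₀ᵀ * V) := by
      rw [hE]
      have e1 : Matrix.diagonal (fun j : Fin q => -dd j) = -Matrix.diagonal dd := by
        rw [← Matrix.diagonal_neg]
      have e2 : Matrix.diagonal (fun i : Fin p => -d₀ i) = -Matrix.diagonal d₀ := by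
        rw [← Matrix.diagonal_neg]
      rw [e1, e2, Matrix.mul_neg, Matrix.neg_mul]
      abel
    have h1 := dk_main hp hq (V₀ᵀ * V) (-(V₀ᵀ * (B - A) * V))
      (fun i => -d₀ i) (fun j => -dd j) hE' (fun i j => neg_lt_neg (hgt i j))
    rw [opNorm_neg''] at h1
    have hset : {r | ∃ i j, r = |-d₀ i - -dd j|} = {r | ∃ i j, r = |d₀ i - dd j|} := by
      ext r
      constructor <;> rintro ⟨i, j, rfl⟩ <;> refine ⟨i, j, ?_⟩ <;>
        rw [← abs_neg] <;> congr 1 <;> ring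
    rw [hset] at h1
    exact h1

end
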